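/- Let H = (V,E) be a hypergraph, b : V → ℤ_{≥1} vertex capacities, x a fractional b-matching on H, and let g : E → ℝ satisfy g(e) ≥ 1 for all e ∈ E. Suppose that for every nonnegative weight function w : E → ℝ_{≥0} there exists a b-matching M with Σ_{e ∈ M} g(e)·w(e) ≥ Σ_{e ∈ E} w(e)·x(e). Then for every (possibly negative) weight function w : E → ℝ there exists a b-matching M with Σ_{e ∈ M} w(e) ≥ Σ_{e ∈ E} w(e)·x(e) / g(e). -/

import Mathlib

open Finset

/-- Let `H = (V, E)` be a hypergraph, `b : V → ℤ≥1`, `x` a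
fractional `b`-matching, and `g : E → ℝ` with `g e ≥ 1`. If for every nonnegative
weight function there is a `b`-matching `M` with
`∑_{e ∈ M} g e * w e ≥ ∑_{e ∈ E} w e * x e`, then for every (possibly negative)
weight function `w` there is a `b`-matching `M` with
`∑_{e ∈ M} w e ≥ ∑_{e ∈ E} w e * x e / g e`. -/
theorem bMatching_nonneg_weights_to_signed_weights
    {α : Type*} [DecidableEq α] (V : Finset α) (E : Finset (Finset α))
    (hE : ∀ e ∈ E, e.Nonempty ∧ e ⊆ V)
    (b : α → ℤ) (hb : ∀ v ∈ V, 1 ≤ b v)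
    (x : Finset α → ℝ)
    (hx01 : ∀ e ∈ E, 0 ≤ x e ∧ x e ≤ 1)
    (hxfrac : ∀ v ∈ V, ∑ e ∈ E.filter (fun e => v ∈ e), x e ≤ (b v : ℝ))
    (g : Finset α → ℝ) (hg : ∀ e ∈ E, 1 ≤ g e)
    (hgreedy : ∀ w : Finset α → ℝ, (∀ e ∈ E, 0 ≤ w e) →
      ∃ M ⊆ E,
        (∀ v ∈ V, ((M.filter (fun e => v ∈ e)).card : ℤ) ≤ b v) ∧
        ∑ e ∈ E, w e * x e ≤ ∑ e ∈ M, g e * w e) :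
    ∀ w : Finset α → ℝ,
      ∃ M ⊆ E,
        (∀ v ∈ V, ((M.filter (fun e => v ∈ e)).card : ℤ) ≤ b v) ∧
        ∑ e ∈ E, w e * x e / g e ≤ ∑ e ∈ M, w e := by
  intro w
  set w' : Finset α → ℝ := fun e => max (w e) 0 / g e with hw'
  have hgpos : ∀ e ∈ E, 0 < g e := fun e he => lt_of_lt_of_le one_pos (hg e he)
  obtain ⟨M, hME, hMcard, hMsum⟩ := hgreedy w' (fun e he =>
    div_nonneg (le_max_right _ _) (hgpos e he).le)
  refine ⟨M.filter (fun e => 0 ≤ w e), (filter_subset _ _).trans hME, ?_, ?_⟩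
  · intro v hv
    refine le_trans ?_ (hMcard v hv)
    exact_mod_cast card_le_card (by
      intro e he
      simp only [mem_filter] at he ⊢
      exact ⟨he.1.1, he.2⟩)
  · calc ∑ e ∈ E, w e * x e / g e
        ≤ ∑ e ∈ E, w' e * x e := by
          refine Finset.sum_le_sum fun e he => ?_
          have hx := (hx01 e he).1
          have hgp := hgpos e he
          rw [hw']
          simp only
          rw [div_mul_eq_mul_div, div_le_div_iff_of_pos_right hgp]
          exact mul_le_mul_of_nonneg_right (le_max_left _ _) hx
      _ ≤ ∑ e ∈ M, g e * w' e := hMsum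
      _ = ∑ e ∈ M, max (w e) 0 := by
          refine Finset.sum_congr rfl fun e he => ?_
          have hgp := hgpos e (hME he)
          simp only [hw']
          field_simp [hgp.ne']
      _ = ∑ e ∈ M.filter (fun e => 0 ≤ w e), w e := by
          rw [← Finset.sum_filter_add_sum_filter_not M (fun e => 0 ≤ w e)]
          have h1 : ∑ e ∈ M.filter (fun e => 0 ≤ w e), max (w e) 0
              = ∑ e ∈ M.filter (fun e => 0 ≤ w e), w e := by
            refine Finset.sum_congr rfl fun e he => ?_
            exact max_eq_left (mem_filter.mp he).2
          have h2 : ∑ e ∈ M.filter (fun e => ¬ 0 ≤ w e), max (w e) 0 = 0 := by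
            refine Finset.sum_eq_zero fun e he => ?_
            exact max_eq_right (le_of_not_ge (mem_filter.mp he).2)
          rw [h1, h2, add_zero]
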